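/- Let (V,d) be a finite metric space with distinct pairwise distances and diameter Δ = max_{v,w} d(v,w). Let L_NUV be the total length of the NUV walk from any starting point v_0, and let N(r) be the minimal size of an r-covering set. Then L_NUV ≤ 2 ∫_0^{Δ/2} N(r) dr. -/

import Mathlib

/-- The length `D(v_i)` of the step taken from the `i`-th visited point. -/
noncomputable def stepLen {V : Type*} [MetricSpace V] {n : ℕ} (e : Fin n → V) (i : Fin n) : ℝ :=
  if h : i.val + 1 < n then dist (e i) (e ⟨i.val + 1, h⟩) else 0

/-- Total length of the walk `e`. -/
noncomputable def walkLen {V : Type*} [MetricSpace V] {n : ℕ} (e : Fin n → V) : ℝ :=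
  ∑ i : Fin n, stepLen e i

/-- `e` is a nearest-unvisited-vertex (greedy) order. -/
def IsNUV {V : Type*} [MetricSpace V] {n : ℕ} (e : Fin n → V) : Prop :=
  ∀ i j : Fin n, i < j → stepLen e i ≤ dist (e i) (e j)

/-- All pairwise distances between distinct points are distinct. -/
def DistinctDistances (V : Type*) [MetricSpace V] : Prop :=
  ∀ a b c d : V, a ≠ b → c ≠ d → dist a b = dist c d → (a = c ∧ b = d) ∨ (a = d ∧ b = c)

/-- `N(r)`: minimal cardinality of a set of centers whose radius-`r` balls cover `V`. -/
noncomputable def coverNum (V : Type*) [MetricSpace V] (r : ℝ) : ℕ :=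
  sInf {k : ℕ | ∃ S : Finset V, S.card = k ∧ ∀ v : V, ∃ s ∈ S, dist v s ≤ r}

lemma coverNum_spec (V : Type*) [MetricSpace V] [Fintype V] {r : ℝ} (hr : 0 ≤ r) :
    ∃ S : Finset V, S.card = coverNum V r ∧ ∀ v : V, ∃ s ∈ S, dist v s ≤ r := by
  have hne : {k : ℕ | ∃ S : Finset V, S.card = k ∧ ∀ v : V, ∃ s ∈ S, dist v s ≤ r}.Nonempty :=
    ⟨Fintype.card V, Finset.univ, rfl, fun v => ⟨v, Finset.mem_univ v, by simpa [dist_self] using hr⟩⟩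
  obtain ⟨S, hS1, hS2⟩ := Nat.sInf_mem hne
  exact ⟨S, hS1, hS2⟩

lemma coverNum_antitone (V : Type*) [MetricSpace V] [Fintype V] {r r' : ℝ} (hr : 0 ≤ r)
    (h : r ≤ r') : coverNum V r' ≤ coverNum V r := by
  have hne : {k : ℕ | ∃ S : Finset V, S.card = k ∧ ∀ v : V, ∃ s ∈ S, dist v s ≤ r}.Nonempty :=
    ⟨Fintype.card V, Finset.univ, rfl, fun v => ⟨v, Finset.mem_univ v, by simpa [dist_self] using hr⟩⟩
  refine csInf_le_csInf (OrderBot.bddBelow _) hne ?_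
  rintro k ⟨S, hS1, hS2⟩
  exact ⟨S, hS1, fun v => (hS2 v).imp fun s hs => ⟨hs.1, hs.2.trans h⟩⟩

/-- Separation bound: the number of indices with step length `> r` is at most `N(r/2)`. -/
lemma card_filter_le {V : Type*} [MetricSpace V] [Fintype V] {n : ℕ} (e : Fin n ≃ V)
    (hNUV : IsNUV (⇑e)) {r : ℝ} (hr : 0 ≤ r) :
    ((Finset.univ.filter fun i : Fin n => r < stepLen (⇑e) i).card : ℝ) ≤ coverNum V (r / 2) := by
  obtain ⟨S, hS1, hS2⟩ := coverNum_spec V (by linarith : (0:ℝ) ≤ r / 2)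
  choose φ hφS hφd using hS2
  have hcard : (Finset.univ.filter fun i : Fin n => r < stepLen (⇑e) i).card ≤ S.card := by
    apply Finset.card_le_card_of_injOn (fun i => φ (e i)) (fun i _ => hφS (e i))
    intro i hi j hj hij
    have hij' : φ (e i) = φ (e j) := hij
    by_contra hne
    rcases lt_trichotomy i j with h | h | h
    · have h1 : stepLen (⇑e) i ≤ dist (e i) (e j) := hNUV i j h
      have h2 : r < stepLen (⇑e) i := by simpa using hi
      have h3 : dist (e i) (e j) ≤ dist (e i) (φ (e i)) + dist (φ (e j)) (e j) := by
        rw [hij']; exact dist_triangle_left _ _ _ |>.trans (by rw [dist_comm (φ (e j))])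
      have h4 := hφd (e i); have h5 := hφd (e j)
      rw [dist_comm (φ (e j)) (e j)] at h3
      linarith
    · exact hne h
    · have h1 : stepLen (⇑e) j ≤ dist (e j) (e i) := hNUV j i h
      have h2 : r < stepLen (⇑e) j := by simpa using hj
      have h3 : dist (e j) (e i) ≤ dist (e j) (φ (e j)) + dist (e i) (φ (e i)) := by
        rw [← hij']; rw [dist_comm (e i)]; exact dist_triangle _ _ _
      have h4 := hφd (e i); have h5 := hφd (e j)
      linarith
  rw [hS1] at hcard
  exact_mod_cast hcard

/-- Proposition 1(ii): `L_NUV ≤ 2 ∫_0^{Δ/2} N(r) dr`. -/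
theorem stmt3 {V : Type*} [MetricSpace V] [Fintype V] {n : ℕ} (hcard : Fintype.card V = n)
    (hd : DistinctDistances V) (e : Fin n ≃ V) (hNUV : IsNUV (⇑e)) :
    walkLen (⇑e) ≤
      2 * ∫ r in (0:ℝ)..(Metric.diam (Set.univ : Set V) / 2), (coverNum V r : ℝ) := by
  classical
  set Δ := Metric.diam (Set.univ : Set V) with hΔ
  have hΔ0 : 0 ≤ Δ := Metric.diam_nonneg
  set f : Fin n → ℝ := stepLen (⇑e) with hf
  have hf0 : ∀ i, 0 ≤ f i := by
    intro i
    show (0:ℝ) ≤ stepLen (⇑e) i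
    unfold stepLen; split
    · exact dist_nonneg
    · exact le_refl 0
  have hfΔ : ∀ i, f i ≤ Δ := by
    intro i
    show stepLen (⇑e) i ≤ Δ
    unfold stepLen; split
    · exact Metric.dist_le_diam_of_mem (Set.finite_univ.isBounded) (Set.mem_univ _) (Set.mem_univ _)
    · exact hΔ0
  -- the step-count function
  set G : ℝ → ℝ := fun r => ((Finset.univ.filter fun i : Fin n => r < f i).card : ℝ) with hG
  -- each indicator integrates to f i
  have hind : ∀ i : Fin n, (∫ r in (0:ℝ)..Δ, (if r < f i then (1:ℝ) else 0)) = f i := by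
    intro i
    have hnull : MeasureTheory.volume ({f i} : Set ℝ) = 0 := by simp
    have hae : (fun r : ℝ => if r < f i then (1:ℝ) else 0)
        =ᵐ[MeasureTheory.volume] fun r => Set.indicator {x : ℝ | x ≤ f i} (fun _ => (1:ℝ)) r := by
      filter_upwards [MeasureTheory.measure_eq_zero_iff_ae_notMem.mp hnull] with r hr
      have hne : r ≠ f i := by simpa using hr
      by_cases h : r < f i
      · simp [h, Set.indicator, le_of_lt h]
      · have hle : ¬ r ≤ f i := fun hle => hne (le_antisymm hle (not_lt.mp h))
        simp [h, Set.indicator, hle]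
    rw [intervalIntegral.integral_congr_ae (hae.mono fun r h _ => h)]
    rw [intervalIntegral.integral_indicator ⟨hf0 i, hfΔ i⟩]
    simp
  -- integrability of the indicators (they are antitone)
  have hint : ∀ i : Fin n, IntervalIntegrable (fun r : ℝ => if r < f i then (1:ℝ) else 0)
      MeasureTheory.volume 0 Δ := by
    intro i
    apply Antitone.intervalIntegrable
    intro a b hab
    by_cases hb : b < f i
    · simp [hb, lt_of_le_of_lt hab hb]
    · by_cases ha : a < f i <;> simp [ha, hb]
  -- walkLen = ∫ G
  have hwalk : walkLen (⇑e) = ∫ r in (0:ℝ)..Δ, G r := by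
    have : (∫ r in (0:ℝ)..Δ, G r)
        = ∫ r in (0:ℝ)..Δ, ∑ i : Fin n, (if r < f i then (1:ℝ) else 0) := by
      apply intervalIntegral.integral_congr
      intro r _
      simp [hG, Finset.sum_boole]
    rw [this, intervalIntegral.integral_finset_sum (fun i _ => hint i)]
    simp only [hind]
    rfl
  -- G is antitone on [0, Δ], as is r ↦ N(r/2)
  have hGanti : Antitone G := by
    intro a b hab
    have : (Finset.univ.filter fun i : Fin n => b < f i)
        ⊆ (Finset.univ.filter fun i : Fin n => a < f i) := by
      intro i hi
      simp only [Finset.mem_filter] at *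
      exact ⟨hi.1, lt_of_le_of_lt hab hi.2⟩
    simp only [hG]
    exact_mod_cast Finset.card_le_card this
  have hNanti : AntitoneOn (fun r : ℝ => (coverNum V (r / 2) : ℝ)) (Set.uIcc 0 Δ) := by
    rw [Set.uIcc_of_le hΔ0]
    intro a ha b hb hab
    show ((coverNum V (b / 2) : ℝ)) ≤ ((coverNum V (a / 2) : ℝ))
    exact_mod_cast coverNum_antitone V (show (0:ℝ) ≤ a / 2 by linarith [ha.1])
      (show a / 2 ≤ b / 2 by linarith)
  have hNint : IntervalIntegrable (fun r : ℝ => (coverNum V (r / 2) : ℝ))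
      MeasureTheory.volume 0 Δ := hNanti.intervalIntegrable
  -- main estimate
  have hmono : (∫ r in (0:ℝ)..Δ, G r) ≤ ∫ r in (0:ℝ)..Δ, (coverNum V (r / 2) : ℝ) := by
    apply intervalIntegral.integral_mono_on hΔ0 (hGanti.intervalIntegrable) hNint
    intro r hr
    exact card_filter_le e hNUV hr.1
  -- change of variables
  have hcov : (∫ r in (0:ℝ)..Δ, (coverNum V (r / 2) : ℝ))
      = 2 * ∫ r in (0:ℝ)..(Δ / 2), (coverNum V r : ℝ) := by
    rw [intervalIntegral.integral_comp_div (fun r => (coverNum V r : ℝ)) two_ne_zero]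
    norm_num [smul_eq_mul]
  calc walkLen (⇑e) = ∫ r in (0:ℝ)..Δ, G r := hwalk
    _ ≤ ∫ r in (0:ℝ)..Δ, (coverNum V (r / 2) : ℝ) := hmono
    _ = 2 * ∫ r in (0:ℝ)..(Δ / 2), (coverNum V r : ℝ) := hcov
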